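/- If y(x) = c₀ + c₂x² (c₂ ≠ 0) solves the reduced decatic equation χ'' - (2√a x⁵ + (b/√a)x³ - ((b²-4ac)/(4a^{3/2}))x)χ' - ((4ac-b²)/(8a^{3/2}) - E)χ = 0 augmented with x² and x⁴ coefficient terms as in equation (9), with a > 0 and parameters satisfying 8·13·a^{5/2} + 8a²d - 4abc + b³ = 0 (the n = 2 necessary condition), then c₂/c₀ = -(8a^{3/2}E + b² - 4ac)/(16a^{3/2}), i.e., the second-degree polynomial solution is proportional to χ₄(x) = 1 - (P₂(E)/(16a^{3/2}))x² with P₂(E) = 8a^{3/2}E + b² - 4ac. -/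

import Mathlib

theorem second_degree_solution_coefficient_ratio
    (a b c d e E c0 c2 : ℝ) (ha : 0 < a) (hc2 : c2 ≠ 0)
    (hnec : 8 * 13 * (Real.sqrt a) ^ 5 + 8 * a ^ 2 * d - 4 * a * b * c + b ^ 3 = 0)
    (y : ℝ → ℝ) (hy : y = fun x => c0 + c2 * x ^ 2)
    (hode : ∀ x : ℝ, deriv (deriv y) x
      - (2 * Real.sqrt a * x ^ 5 + (b / Real.sqrt a) * x ^ 3
          - ((b ^ 2 - 4 * a * c) / (4 * (Real.sqrt a) ^ 3)) * x) * deriv y x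
      - ((4 * a * c - b ^ 2) / (8 * (Real.sqrt a) ^ 3) - E
          + ((64 * a ^ 3 * e + 96 * (Real.sqrt a) ^ 5 * b - b ^ 4 + 8 * a * b ^ 2 * c
              - 16 * a ^ 2 * c ^ 2) / (64 * a ^ 3)) * x ^ 2
          + ((8 * a ^ 2 * d + 40 * (Real.sqrt a) ^ 5 + b ^ 3 - 4 * a * b * c)
              / (8 * a ^ 2)) * x ^ 4) * y x = 0) :
    c2 / c0 = -(8 * (Real.sqrt a) ^ 3 * E + b ^ 2 - 4 * a * c) / (16 * (Real.sqrt a) ^ 3) := by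
  have hd1 : deriv y = fun x => 2 * c2 * x := by
    funext x
    rw [hy]
    have : HasDerivAt (fun x : ℝ => c0 + c2 * x ^ 2) (2 * c2 * x) x := by
      have h := ((hasDerivAt_pow 2 x).const_mul c2).const_add c0
      refine h.congr_deriv ?_
      norm_num
      ring
    exact this.deriv
  have hd2 : deriv (deriv y) 0 = 2 * c2 := by
    rw [hd1]
    have : HasDerivAt (fun x : ℝ => 2 * c2 * x) (2 * c2) 0 := by
      simpa using (hasDerivAt_id (0:ℝ)).const_mul (2 * c2)
    exact this.deriv
  have h0 := hode 0
  rw [hd2, hd1, hy] at h0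
  simp only [ne_eq, mul_zero, zero_pow, pow_succ, pow_zero] at h0
  norm_num at h0
  -- h0 : 2*c2 - ((4ac-b²)/(8√a³) - E) * c0 = 0
  have hs : (0:ℝ) < Real.sqrt a := Real.sqrt_pos.mpr ha
  have hs3 : (Real.sqrt a) ^ 3 ≠ 0 := by positivity
  have hc0 : c0 ≠ 0 := by
    intro h
    rw [h] at h0
    norm_num at h0
    exact hc2 h0
  have hpow : (Real.sqrt a) ^ 3 = a * Real.sqrt a := by
    rw [pow_succ, Real.sq_sqrt ha.le]
  field_simp at h0 ⊢
  rw [hpow]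
  linear_combination h0 - (16 * c2 + 8 * c0 * E) * hpow
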